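/- If E is an edge class of a finite simple graph G, then the set V(E) of vertices incident to at least one edge of E is a module of G. -/

import Mathlib

/-- A module (homogeneous set) of a simple graph. -/
def SimpleGraph.IsModuleSet {V : Type*} (G : SimpleGraph V) (M : Set V) : Prop :=
  ∀ v ∉ M, (∀ u ∈ M, G.Adj v u) ∨ (∀ u ∈ M, ¬ G.Adj v u)

/-- The basic step of Gallai's relation `∧` on edges. -/
def SimpleGraph.EdgeStep {V : Type*} (G : SimpleGraph V) (e f : Sym2 V) : Prop :=
  ∃ a b c, G.Adj a b ∧ G.Adj b c ∧ ¬ G.Adj a c ∧ e = s(a, b) ∧ f = s(b, c)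

/-- Two edges lie in the same edge class iff they are joined by a finite sequence of
edges in which consecutive edges are related by `∧`. -/
def SimpleGraph.SameEdgeClass {V : Type*} (G : SimpleGraph V) (e f : Sym2 V) : Prop :=
  Relation.ReflTransGen G.EdgeStep e f

lemma edgeStep_symm {V : Type*} {G : SimpleGraph V} : Symmetric G.EdgeStep := by
  rintro e f ⟨a, b, c, hab, hbc, hac, rfl, rfl⟩
  exact ⟨c, b, a, hbc.symm, hab.symm, fun h => hac h.symm, Sym2.eq_swap, Sym2.eq_swap⟩

lemma adj_other {V : Type*} {G : SimpleGraph V} {e : Sym2 V} {v a b : V}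
    (hM : v ∉ {v | ∃ f ∈ G.edgeSet, G.SameEdgeClass e f ∧ v ∈ f})
    (hcl : G.SameEdgeClass e s(a, b)) (hab : G.Adj a b) (hva : G.Adj v a) :
    G.Adj v b := by
  by_contra hvb
  exact hM ⟨s(a, v), G.mem_edgeSet.2 hva.symm,
    hcl.tail ⟨b, a, v, hab.symm, hva.symm, fun h => hvb h.symm, Sym2.eq_swap, rfl⟩,
    Sym2.mem_mk_right a v⟩

lemma adj_chain {V : Type*} {G : SimpleGraph V} {e f g : Sym2 V} {v : V}
    (hM : v ∉ {v | ∃ f ∈ G.edgeSet, G.SameEdgeClass e f ∧ v ∈ f})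
    (hef : G.SameEdgeClass e f) (hfg : G.SameEdgeClass f g)
    (hv : ∀ x ∈ f, G.Adj v x) : ∀ x ∈ g, G.Adj v x := by
  induction hfg with
  | refl => exact hv
  | @tail g h hfg hstep ih =>
    obtain ⟨a, b, c, hab, hbc, hac, rfl, rfl⟩ := hstep
    intro x hx
    rcases Sym2.mem_iff.1 hx with rfl | rfl
    · exact ih x (Sym2.mem_mk_right a x)
    · exact adj_other hM
        (hef.trans (hfg.tail ⟨a, b, x, hab, hbc, hac, rfl, rfl⟩)) hbc
        (ih b (Sym2.mem_mk_right a b))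

/-- The vertices incident to an edge of the edge class of a given edge `e` form a module. -/
theorem edgeClass_vertexSet_isModule {V : Type*} [Fintype V] (G : SimpleGraph V)
    (e : Sym2 V) (he : e ∈ G.edgeSet) :
    G.IsModuleSet {v | ∃ f ∈ G.edgeSet, G.SameEdgeClass e f ∧ v ∈ f} := by
  intro v hv
  by_cases h : ∃ u ∈ {v | ∃ f ∈ G.edgeSet, G.SameEdgeClass e f ∧ v ∈ f}, G.Adj v u
  · left
    obtain ⟨u, ⟨f, hfE, hcl, huf⟩, hvu⟩ := h
    -- destruct f
    obtain ⟨⟨a, b⟩, rfl⟩ := f.exists_rep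
    have hab : G.Adj a b := G.mem_edgeSet.1 hfE
    have hvboth : ∀ x ∈ s(a, b), G.Adj v x := by
      rcases Sym2.mem_iff.1 huf with rfl | rfl
      · intro x hx
        rcases Sym2.mem_iff.1 hx with rfl | rfl
        · exact hvu
        · exact adj_other hv hcl hab hvu
      · intro x hx
        rcases Sym2.mem_iff.1 hx with rfl | rfl
        · exact adj_other hv (Sym2.eq_swap ▸ hcl) hab.symm hvu
        · exact hvu
    have he_adj : ∀ x ∈ e, G.Adj v x :=
      adj_chain hv hcl (by haveI : Std.Symm G.EdgeStep := ⟨edgeStep_symm⟩; exact Std.Symm.symm (self := Relation.ReflTransGen.symmetric) _ _ hcl) hvboth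
    rintro u' ⟨f', hf'E, hcl', hu'f'⟩
    exact adj_chain hv Relation.ReflTransGen.refl hcl' he_adj u' hu'f'
  · right
    push_neg at h
    exact h
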